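/- Let Σ be an alphabet with marked copy alphabet Σ̄ (a disjoint copy of Σ, with the marking map w ↦ w̄ applied letterwise). If the language L_Σ = ⋃_{w ∈ Σ*} (w ⧢ w̄) were context-free and |Σ| ≥ 2, then the copy language {ww : w ∈ Σ*} would be context-free. Hence L_Σ is not context-free for |Σ| ≥ 2. -/

import Mathlib

/-- `Shuffle u v w` means `w` is an interleaving (shuffle) of `u` and `v`. -/
inductive Shuffle {α : Type*} : List α → List α → List α → Prop
  | nil : Shuffle [] [] []
  | left {a : α} {u v w : List α} : Shuffle u v w → Shuffle (a :: u) v (a :: w)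
  | right {a : α} {u v w : List α} : Shuffle u v w → Shuffle u (a :: v) (a :: w)

/-- `L_Σ = ⋃_{w ∈ Σ*} (w ⧢ w̄)`, over the alphabet `α ⊕ α` whose left component is `Σ`
and whose right component is the marked copy alphabet `Σ̄`. -/
def markedSelfShuffle (α : Type) : Language (α ⊕ α) :=
  {w | ∃ u : List α, Shuffle (u.map Sum.inl) (u.map Sum.inr) w}

namespace CopyPump
open ContextFreeGrammar

variable {T : Type}

/-- Height-bounded derivation-tree predicate for a single symbol. -/
def DS (g : ContextFreeGrammar.{0} T) : ℕ → Symbol T g.NT → List T → Prop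
  | 0 => fun _ _ => False
  | h+1 => fun s w =>
      match s with
      | .terminal t => w = [t]
      | .nonterminal A => ∃ r ∈ g.rules, r.input = A ∧
          ∃ ws : List (List T), w = ws.flatten ∧ List.Forall₂ (DS g h) r.output ws

variable {g : ContextFreeGrammar.{0} T}

lemma DS_zero {s : Symbol T g.NT} {w : List T} : ¬ DS g 0 s w := fun h => h

lemma DS_succ_term {t : T} {w : List T} {h : ℕ} :
    DS g (h+1) (Symbol.terminal t) w ↔ w = [t] := Iff.rfl

lemma DS_succ_nt {A : g.NT} {w : List T} {h : ℕ} :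
    DS g (h+1) (Symbol.nonterminal A) w ↔ ∃ r ∈ g.rules, r.input = A ∧
      ∃ ws : List (List T), w = ws.flatten ∧ List.Forall₂ (DS g h) r.output ws := Iff.rfl

lemma DS.mono : ∀ {h h' : ℕ}, h ≤ h' → ∀ {s : Symbol T g.NT} {w : List T},
    DS g h s w → DS g h' s w := by
  intro h
  induction h with
  | zero => intro h' _ s w hds; exact absurd hds DS_zero
  | succ h ih =>
    intro h' hle s w hds
    obtain ⟨h', rfl⟩ : ∃ k, h' = k + 1 := ⟨h' - 1, by omega⟩
    cases s with
    | terminal t => exact hds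
    | nonterminal A =>
      obtain ⟨r, hr, hri, ws, hw, hf⟩ := hds
      exact ⟨r, hr, hri, ws, hw, hf.imp fun a b hab => ih (by omega) hab⟩

/-- Soundness for lists, from per-symbol soundness at height `h`. -/
lemma derives_list_of {h : ℕ}
    (ih : ∀ {s : Symbol T g.NT} {w : List T}, DS g h s w →
      g.Derives [s] (w.map Symbol.terminal)) :
    ∀ {ss : List (Symbol T g.NT)} {ws : List (List T)},
    List.Forall₂ (DS g h) ss ws → g.Derives ss (ws.flatten.map Symbol.terminal) := by
  intro ss ws hf
  induction hf with
  | nil => exact Derives.refl []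
  | @cons s' w' ss' ws' hsw _ ihf =>
    have h2 : g.Derives ([s'] ++ ss') ((w'.map Symbol.terminal) ++ ss') :=
      (ih hsw).append_right ss'
    simpa using h2.trans (ihf.append_left (w'.map Symbol.terminal))

/-- Soundness: a `DS`-tree yields an actual derivation. -/
lemma DS.derives : ∀ {h : ℕ} {s : Symbol T g.NT} {w : List T},
    DS g h s w → g.Derives [s] (w.map Symbol.terminal) := by
  intro h
  induction h with
  | zero => intro s w hds; exact absurd hds DS_zero
  | succ h ih =>
    intro s w hds
    cases s with
    | terminal t => rw [hds]; rfl
    | nonterminal A =>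
      obtain ⟨r, hr, hri, ws, rfl, hf⟩ := hds
      have h1 : g.Derives [Symbol.nonterminal A] r.output := by
        subst hri
        exact (Produces.single ⟨r, hr, ContextFreeRule.Rewrites.input_output⟩)
      exact h1.trans (derives_list_of ih hf)

/-- Soundness for lists of symbols. -/
lemma DS.derives_list {h : ℕ} {ss : List (Symbol T g.NT)} {ws : List (List T)}
    (hf : List.Forall₂ (DS g h) ss ws) :
    g.Derives ss (ws.flatten.map Symbol.terminal) :=
  derives_list_of (fun h => DS.derives h) hf


lemma forall₂_append_split {A B : Type*} {R : A → B → Prop} :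
    ∀ {l₁ l₂ : List A} {ws : List B}, List.Forall₂ R (l₁ ++ l₂) ws →
      ∃ w₁ w₂, ws = w₁ ++ w₂ ∧ List.Forall₂ R l₁ w₁ ∧ List.Forall₂ R l₂ w₂ := by
  intro l₁
  induction l₁ with
  | nil => intro l₂ ws hf; exact ⟨[], ws, rfl, List.Forall₂.nil, hf⟩
  | cons a l₁ ih =>
    intro l₂ ws hf
    cases hf with
    | cons hab hrest =>
      obtain ⟨w₁, w₂, rfl, hf₁, hf₂⟩ := ih hrest
      exact ⟨_ :: w₁, w₂, rfl, List.Forall₂.cons hab hf₁, hf₂⟩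

/-- `DSL g h ss w`: the sentential form `ss` derives the word `w` with all trees of height `≤ h`. -/
def DSL (g : ContextFreeGrammar.{0} T) (h : ℕ) (ss : List (Symbol T g.NT)) (w : List T) : Prop :=
  ∃ ws : List (List T), w = ws.flatten ∧ List.Forall₂ (DS g h) ss ws

lemma DSL_refl (w : List T) : DSL g 1 (w.map Symbol.terminal) w := by
  refine ⟨w.map (fun t => [t]), ?_, ?_⟩
  · induction w with
    | nil => rfl
    | cons a w ih => simpa using ih
  · induction w with
    | nil => exact List.Forall₂.nil
    | cons a w ih => exact List.Forall₂.cons rfl ih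

/-- Completeness: derivations give height-bounded trees. -/
lemma derives_dsl {ss : List (Symbol T g.NT)} {w : List T}
    (hd : g.Derives ss (w.map Symbol.terminal)) : ∃ h, DSL g h ss w := by
  induction hd using Relation.ReflTransGen.head_induction_on with
  | refl => exact ⟨1, DSL_refl w⟩
  | head hp _ ih =>
    obtain ⟨h, ws, rfl, hf⟩ := ih
    obtain ⟨r, hr, hrw⟩ := hp
    obtain ⟨p, q, rfl, rfl⟩ := hrw.exists_parts
    rw [show p ++ r.output ++ q = p ++ (r.output ++ q) by simp] at hf
    obtain ⟨wp, wrest, rfl, hfp, hfrest⟩ := forall₂_append_split hf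
    obtain ⟨wmid, wq, rfl, hfmid, hfq⟩ := forall₂_append_split hfrest
    refine ⟨h + 1, wp ++ [wmid.flatten] ++ wq, by simp, ?_⟩
    have hmid : DS g (h+1) (Symbol.nonterminal r.input) wmid.flatten :=
      ⟨r, hr, rfl, wmid, rfl, hfmid⟩
    have h1 : List.Forall₂ (DS g (h+1)) p wp := hfp.imp fun _ _ => DS.mono (Nat.le_succ h)
    have h2 : List.Forall₂ (DS g (h+1)) q wq := hfq.imp fun _ _ => DS.mono (Nat.le_succ h)
    have := List.rel_append h1 (List.rel_append
      (List.Forall₂.cons hmid List.Forall₂.nil) h2)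
    simpa using this

lemma mem_language_ds {w : List T} (hw : w ∈ g.language) :
    ∃ h, DS g h (Symbol.nonterminal g.initial) w := by
  obtain ⟨h, ws, hflat, hf⟩ := derives_dsl ((mem_language_iff g w).mp hw)
  cases hf with
  | cons hab hrest =>
    cases hrest
    refine ⟨h, ?_⟩
    simpa [hflat] using hab


/-! ### Constants of a grammar -/

/-- A bound (≥ 2) on the lengths of right-hand sides of rules. -/
noncomputable def mc (g : ContextFreeGrammar.{0} T) : ℕ :=
  (g.rules.toList.map (fun r => r.output.length)).sum + 2

lemma two_le_mc : 2 ≤ mc g := Nat.le_add_left 2 _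

lemma output_le_mc {r : ContextFreeRule T g.NT} (hr : r ∈ g.rules) :
    r.output.length ≤ mc g := by
  have hm : r.output.length ∈ (g.rules.toList.map (fun r => r.output.length)) :=
    List.mem_map_of_mem (Finset.mem_toList.mpr hr)
  have := List.single_le_sum (fun x _ => Nat.zero_le x) _ hm
  unfold mc; omega

/-- The list of left-hand sides of rules. -/
noncomputable def allNT (g : ContextFreeGrammar.{0} T) : List g.NT := g.rules.toList.map (·.input)

lemma input_mem_allNT {r : ContextFreeRule T g.NT} (hr : r ∈ g.rules) :
    r.input ∈ allNT g :=
  List.mem_map_of_mem (Finset.mem_toList.mpr hr)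

/-! ### Chains of strictly decreasing pumpable contexts -/

/-- A chain of `d` nested, strictly shrinking contexts below `A`, with absolute size bounds. -/
inductive Chain (g : ContextFreeGrammar.{0} T) : ℕ → g.NT → List T → Prop
  | base {A : g.NT} {w : List T} {h : ℕ} (hds : DS g h (Symbol.nonterminal A) w)
      (hA : A ∈ allNT g) (hlen : w.length ≤ mc g) : Chain g 0 A w
  | step {A B : g.NT} {u w' z : List T} {d h : ℕ} (hc : Chain g d B w')
      (hds : DS g h (Symbol.nonterminal A) (u ++ w' ++ z)) (hA : A ∈ allNT g)
      (hder : g.Derives [Symbol.nonterminal A]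
        (u.map Symbol.terminal ++ [Symbol.nonterminal B] ++ z.map Symbol.terminal))
      (hne : u ++ z ≠ []) (hlen : (u ++ w' ++ z).length ≤ mc g ^ (d + 3)) :
      Chain g (d+1) A (u ++ w' ++ z)

lemma Chain.length_le {d : ℕ} {A : g.NT} {w : List T} (hc : Chain g d A w) :
    w.length ≤ mc g ^ (d + 2) := by
  cases hc with
  | base hds hA hlen =>
    calc w.length ≤ mc g := hlen
    _ ≤ mc g ^ 2 := by
        have h2 : 2 ≤ mc g := two_le_mc
        nlinarith
  | step hc hds hA hder hne hlen => exact hlen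

/-- Finding a "maximal" child with its context. -/
lemma split_max {h : ℕ} {ss : List (Symbol T g.NT)} {ws : List (List T)}
    (hf : List.Forall₂ (DS g h) ss ws) (hne : ws ≠ []) :
    ∃ (u0 : List T) (s' : Symbol T g.NT) (w1 z0 : List T),
      ws.flatten = u0 ++ w1 ++ z0 ∧ DS g h s' w1 ∧
      ws.flatten.length ≤ ss.length * w1.length ∧
      g.Derives ss (u0.map Symbol.terminal ++ [s'] ++ z0.map Symbol.terminal) := by
  induction hf with
  | nil => exact absurd rfl hne
  | @cons s w0 ss' ws' hsw hrest ih =>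
    by_cases hws' : ws' = []
    · subst hws'
      cases hrest
      refine ⟨[], s, w0, [], by simp, hsw, by simp, ?_⟩
      simpa using Derives.refl [s]
    · obtain ⟨u0', s'', w1', z0', heq, hds'', hlen', hder'⟩ := ih hws'
      rcases le_or_gt w0.length w1'.length with hle | hlt
      · refine ⟨w0 ++ u0', s'', w1', z0', by simp [heq], hds'', ?_, ?_⟩
        · have h1 : ws'.flatten.length ≤ ss'.length * w1'.length := hlen'
          simp only [List.flatten_cons, List.length_append, List.length_cons]
          calc w0.length + ws'.flatten.length
              ≤ w1'.length + ss'.length * w1'.length := by omega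
            _ = (ss'.length + 1) * w1'.length := by ring
        · have hstep : g.Derives ([s] ++ ss') (w0.map Symbol.terminal ++ ss') :=
            (hsw.derives).append_right ss'
          have hstep2 := hder'.append_left (w0.map Symbol.terminal)
          have := hstep.trans hstep2
          simpa using this
      · refine ⟨[], s, w0, ws'.flatten, by simp, hsw, ?_, ?_⟩
        · have h1 : ws'.flatten.length ≤ ss'.length * w1'.length := hlen'
          have h2 : ss'.length * w1'.length ≤ ss'.length * w0.length :=
            Nat.mul_le_mul_left _ (by omega)
          simp only [List.flatten_cons, List.length_append, List.length_cons]
          calc w0.length + ws'.flatten.length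
              ≤ w0.length + ss'.length * w0.length := by omega
            _ = (ss'.length + 1) * w0.length := by ring
        · have := (DS.derives_list hrest).append_left [s]
          simpa using this

lemma DS_big_nonterminal {h : ℕ} {s : Symbol T g.NT} {w : List T}
    (hds : DS g h s w) (hw : 2 ≤ w.length) : ∃ B, s = Symbol.nonterminal B := by
  cases h with
  | zero => exact absurd hds DS_zero
  | succ h =>
    cases s with
    | terminal t => rw [DS_succ_term] at hds; subst hds; simp at hw
    | nonterminal B => exact ⟨B, rfl⟩

/-- Construction of a chain of length `d` below any node of sufficient yield. -/
lemma build : ∀ (h : ℕ) {A : g.NT} {w : List T} (d : ℕ),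
    DS g h (Symbol.nonterminal A) w → (0 < d → mc g ^ (d+1) ≤ w.length) →
    ∃ (u w' z : List T) (A' : g.NT), w = u ++ w' ++ z ∧
      g.Derives [Symbol.nonterminal A]
        (u.map Symbol.terminal ++ [Symbol.nonterminal A'] ++ z.map Symbol.terminal) ∧
      Chain g d A' w' := by
  intro h
  induction h with
  | zero => intro A w d hds; exact absurd hds DS_zero
  | succ h ih =>
    intro A w d hds hlow
    obtain ⟨r, hr, hri, ws, hwflat, hf⟩ := hds
    have hds' : DS g (h+1) (Symbol.nonterminal A) w := ⟨r, hr, hri, ws, hwflat, hf⟩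
    have hA : A ∈ allNT g := hri ▸ input_mem_allNT hr
    by_cases hsmall : d = 0 ∧ w.length ≤ mc g
    · obtain ⟨rfl, hle⟩ := hsmall
      exact ⟨[], w, [], A, by simp, Derives.refl _, Chain.base hds' hA hle⟩
    · have hbig : mc g < w.length := by
        rcases Nat.eq_zero_or_pos d with rfl | hd
        · push_neg at hsmall; exact hsmall rfl
        · have h1 : mc g ^ (d+1) ≤ w.length := hlow hd
          have h2 : mc g ^ 1 < mc g ^ (d+1) :=
            Nat.pow_lt_pow_right (by have := @two_le_mc T g; omega) (by omega)
          simpa using lt_of_lt_of_le h2 h1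
      have hwsne : ws ≠ [] := by
        intro hcon
        rw [hcon] at hwflat
        simp [hwflat] at hbig
      obtain ⟨u0, s', w1, z0, heq, hds1, hlen1, hder1⟩ := split_max hf hwsne
      rw [← hwflat] at heq hlen1
      have houtlen : r.output.length ≤ mc g := output_le_mc hr
      have hwle : w.length ≤ mc g * w1.length :=
        le_trans hlen1 (Nat.mul_le_mul_right _ houtlen)
      have h2w1 : 2 ≤ w1.length := by
        by_contra hcon
        push_neg at hcon
        have h1 : mc g * w1.length ≤ mc g * 1 := Nat.mul_le_mul_left _ (by omega)
        omega
      obtain ⟨B, rfl⟩ := DS_big_nonterminal hds1 h2w1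
      have hderA : g.Derives [Symbol.nonterminal A]
          (u0.map Symbol.terminal ++ [Symbol.nonterminal B] ++ z0.map Symbol.terminal) := by
        have hstep : g.Produces [Symbol.nonterminal A] r.output := by
          refine ⟨r, hr, ?_⟩
          rw [← hri]
          exact ContextFreeRule.Rewrites.input_output
        exact hstep.trans_derives hder1
      by_cases hstep : 0 < d ∧ w1.length < w.length ∧ w.length ≤ mc g ^ (d+2)
      · obtain ⟨hd, hlt, hb⟩ := hstep
        have hrec : 0 < d - 1 → mc g ^ (d - 1 + 1) ≤ w1.length := by
          intro hd1
          have hde : d - 1 + 1 = d := by omega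
          rw [hde]
          have h1 : mc g * mc g ^ d ≤ mc g * w1.length := by
            have : mc g ^ (d+1) ≤ w.length := hlow hd
            calc mc g * mc g ^ d = mc g ^ (d+1) := by ring
              _ ≤ w.length := this
              _ ≤ mc g * w1.length := hwle
          exact Nat.le_of_mul_le_mul_left h1 (by have := @two_le_mc T g; omega)
        obtain ⟨u', w'', z', A'', heq2, hder2, hch⟩ := ih (d-1) hds1 hrec
        have hkey : w = (u0 ++ u') ++ w'' ++ (z' ++ z0) := by
          rw [heq, heq2]; simp
        have hcomp : g.Derives [Symbol.nonterminal A]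
            ((u0 ++ u').map Symbol.terminal ++ [Symbol.nonterminal A''] ++
              ((z' ++ z0).map Symbol.terminal)) := by
          refine hderA.trans ?_
          have := (hder2.append_left (u0.map Symbol.terminal)).append_right
            (z0.map Symbol.terminal)
          simpa using this
        have hne2 : (u0 ++ u') ++ (z' ++ z0) ≠ [] := by
          intro hcon
          have h0 : w = w'' := by
            rw [hkey]
            have h1 : u0 ++ u' = [] := by
              rcases List.append_eq_nil_iff.mp hcon with ⟨h1, _⟩; exact h1
            have h2 : z' ++ z0 = [] := by
              rcases List.append_eq_nil_iff.mp hcon with ⟨_, h2⟩; exact h2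
            rw [h1, h2]; simp
          have hw'' : w''.length ≤ w1.length := by
            have := congrArg List.length heq2
            simp only [List.length_append] at this
            omega
          have hlen0 := congrArg List.length h0
          omega
        have hdsW : DS g (h+1) (Symbol.nonterminal A) ((u0 ++ u') ++ w'' ++ (z' ++ z0)) := by
          rw [← hkey]; exact hds'
        have hlenW : ((u0 ++ u') ++ w'' ++ (z' ++ z0)).length ≤ mc g ^ (d - 1 + 3) := by
          rw [← hkey]
          have : d - 1 + 3 = d + 2 := by omega
          rw [this]; exact hb
        have hchain : Chain g (d - 1 + 1) A ((u0 ++ u') ++ w'' ++ (z' ++ z0)) :=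
          Chain.step hch hdsW hA hcomp hne2 hlenW
        have hde : d - 1 + 1 = d := by omega
        rw [hde] at hchain
        rw [← hkey] at hchain
        exact ⟨[], w, [], A, by simp, Derives.refl _, hchain⟩
      · have hrec : 0 < d → mc g ^ (d+1) ≤ w1.length := by
          intro hd
          push_neg at hstep
          rcases lt_or_ge w1.length w.length with hlt | hge
          · have hb := hstep hd hlt
            have h1 : mc g * mc g ^ (d+1) < mc g * w1.length := by
              calc mc g * mc g ^ (d+1) = mc g ^ (d+2) := by ring
                _ < w.length := hb
                _ ≤ mc g * w1.length := hwle
            exact le_of_lt (Nat.lt_of_mul_lt_mul_left h1)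
          · exact le_trans (hlow hd) hge
        obtain ⟨u', w', z', A', heq2, hder2, hch⟩ := ih d hds1 hrec
        refine ⟨u0 ++ u', w', z' ++ z0, A', ?_, ?_, hch⟩
        · rw [heq, heq2]; simp
        · refine hderA.trans ?_
          have := (hder2.append_left (u0.map Symbol.terminal)).append_right
            (z0.map Symbol.terminal)
          simpa using this


local notation "tm" u => List.map (@Symbol.terminal T g.NT) u

/-- Key lemma: a chain either yields a pumpable repetition, or `d+1` distinct rule inputs. -/
lemma chain_key : ∀ {d : ℕ} {A : g.NT} {w : List T}, Chain g d A w →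
    (∃ (B : g.NT) (u v x y z : List T), w = u ++ v ++ x ++ y ++ z ∧ v ++ y ≠ [] ∧
      g.Derives [Symbol.nonterminal A] ((tm u) ++ [Symbol.nonterminal B] ++ (tm z)) ∧
      g.Derives [Symbol.nonterminal B] ((tm v) ++ [Symbol.nonterminal B] ++ (tm y)) ∧
      g.Derives [Symbol.nonterminal B] (tm x)) ∨
    (∃ l : List g.NT, l.Nodup ∧ l.length = d + 1 ∧ (∀ C ∈ l, C ∈ allNT g) ∧
      ∀ C ∈ l, ∃ u1 wC z1, w = u1 ++ wC ++ z1 ∧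
        g.Derives [Symbol.nonterminal A] ((tm u1) ++ [Symbol.nonterminal C] ++ (tm z1)) ∧
        g.Derives [Symbol.nonterminal C] (tm wC) ∧
        (C ≠ A → wC.length < w.length)) := by
  intro d A w hc
  induction hc with
  | @base A w h hds hA hlen =>
    right
    refine ⟨[A], by simp, by simp, by simpa using hA, ?_⟩
    intro C hC
    simp only [List.mem_singleton] at hC
    subst hC
    exact ⟨[], w, [], by simp, by simpa using Derives.refl _, hds.derives,
      fun hne => absurd rfl hne⟩
  | @step A B u w' z d h hcB hds hA hder hne hlen ih =>
    rcases ih with ⟨B', u', v, x, y, z', heq, hvy, hd1, hd2, hd3⟩ | ⟨l, hnd, hll, hlNT, hldata⟩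
    · -- lift the repetition through the outer context
      left
      refine ⟨B', u ++ u', v, x, y, z' ++ z, by rw [heq]; simp, hvy, ?_, hd2, hd3⟩
      refine hder.trans ?_
      have := (hd1.append_left (tm u)).append_right (tm z)
      simpa using this
    · by_cases hAl : A ∈ l
      · -- repetition found: A occurs below itself
        left
        obtain ⟨u1, wA, z1, heq1, hder1, hder2, _⟩ := hldata A hAl
        refine ⟨A, [], u ++ u1, wA, z1 ++ z, [], by rw [heq1]; simp, ?_, ?_, ?_, hder2⟩
        · intro hcon
          have h1 := congrArg List.length hcon
          simp only [List.length_append, List.length_nil] at h1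
          apply hne
          have hu : u = [] := by
            apply List.eq_nil_of_length_eq_zero; omega
          have hz : z = [] := by
            apply List.eq_nil_of_length_eq_zero; omega
          rw [hu, hz]; rfl
        · simpa using Derives.refl _
        · have hcomp : g.Derives [Symbol.nonterminal A]
              ((tm (u ++ u1)) ++ [Symbol.nonterminal A] ++ (tm (z1 ++ z))) := by
            refine hder.trans ?_
            have := (hder1.append_left (tm u)).append_right (tm z)
            simpa using this
          simpa using hcomp
      · -- extend the nodup list with A
        right
        refine ⟨A :: l, List.nodup_cons.mpr ⟨hAl, hnd⟩, by simp [hll], ?_, ?_⟩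
        · intro C hC
          rcases List.mem_cons.mp hC with rfl | hC
          · exact hA
          · exact hlNT C hC
        · intro C hC
          rcases List.mem_cons.mp hC with rfl | hC
          · exact ⟨[], u ++ w' ++ z, [], by simp, by simpa using Derives.refl _,
              hds.derives, fun hne' => absurd rfl hne'⟩
          · obtain ⟨u1, wC, z1, heq1, hder1, hder2, hlt⟩ := hldata C hC
            refine ⟨u ++ u1, wC, z1 ++ z, by rw [heq1]; simp, ?_, hder2, ?_⟩
            · refine hder.trans ?_
              have := (hder1.append_left (tm u)).append_right (tm z)
              simpa using this
            · intro _
              have h1 := congrArg List.length heq1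
              simp only [List.length_append] at h1 ⊢
              have h2 : u.length + z.length ≠ 0 := by
                intro hcon
                apply hne
                have hu : u = [] := List.eq_nil_of_length_eq_zero (by omega)
                have hz : z = [] := List.eq_nil_of_length_eq_zero (by omega)
                rw [hu, hz]; rfl
              omega

/-- A weak pumping lemma: long words contain a removable nonempty part of bounded width. -/
lemma weak_pumping :
    ∃ p : ℕ, 1 ≤ p ∧ ∀ w ∈ g.language, p ≤ w.length →
      ∃ u v x y z : List T, w = u ++ v ++ x ++ y ++ z ∧
        (v ++ x ++ y).length ≤ p ∧ v ++ y ≠ [] ∧ u ++ x ++ z ∈ g.language := by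
  classical
  set K := (allNT g).length with hK
  refine ⟨mc g ^ (K + 2), Nat.one_le_iff_ne_zero.mpr (pow_ne_zero _ (by
    have := @two_le_mc T g; omega)), ?_⟩
  intro w hw hwlen
  obtain ⟨h, hds⟩ := mem_language_ds hw
  have hlow : 0 < K → mc g ^ (K + 1) ≤ w.length := by
    intro _
    refine le_trans ?_ hwlen
    exact Nat.pow_le_pow_right (by have := @two_le_mc T g; omega) (by omega)
  obtain ⟨U, w', Z, A', heq, hder, hch⟩ := build (g := g) h K hds hlow
  rcases chain_key hch with ⟨B, u1, v, x, y, z1, heq2, hvy, hd1, hd2, hd3⟩ |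
    ⟨l, hnd, hll, hlNT, _⟩
  · refine ⟨U ++ u1, v, x, y, z1 ++ Z, by rw [heq, heq2]; simp, ?_, hvy, ?_⟩
    · have h1 : (v ++ x ++ y).length ≤ w'.length := by
        have := congrArg List.length heq2
        simp only [List.length_append] at this ⊢
        omega
      exact le_trans h1 hch.length_le
    · rw [mem_language_iff]
      have hcomp : g.Derives [Symbol.nonterminal g.initial]
          ((tm (U ++ u1)) ++ [Symbol.nonterminal B] ++ (tm (z1 ++ Z))) := by
        refine hder.trans ?_
        have := (hd1.append_left (tm U)).append_right (tm Z)
        simpa using this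
      have hfin : g.Derives ((tm (U ++ u1)) ++ [Symbol.nonterminal B] ++ (tm (z1 ++ Z)))
          ((tm (U ++ u1)) ++ (tm x) ++ (tm (z1 ++ Z))) := by
        have := (hd3.append_left (tm (U ++ u1))).append_right (tm (z1 ++ Z))
        simpa using this
      have := hcomp.trans hfin
      simpa using this
  · exfalso
    have hsub : l ⊆ allNT g := fun C hC => hlNT C hC
    have := (List.subperm_of_subset hnd hsub).length_le
    omega


/-! ### Letter counting -/

/-- Number of occurrences of `t` in `l` (avoiding `BEq` instances). -/
def cnt {β : Type*} [DecidableEq β] (t : β) (l : List β) : ℕ :=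
  l.countP (fun c => decide (c = t))

section cnt
variable {β γ : Type*} [DecidableEq β] [DecidableEq γ]

lemma cnt_append (t : β) (l1 l2 : List β) : cnt t (l1 ++ l2) = cnt t l1 + cnt t l2 :=
  List.countP_append

lemma cnt_cons (t a : β) (l : List β) : cnt t (a :: l) = cnt t l + if a = t then 1 else 0 := by
  simp [cnt, List.countP_cons]

lemma cnt_replicate (t s : β) (n : ℕ) : cnt t (List.replicate n s) = if s = t then n else 0 := by
  induction n with
  | zero => simp [cnt]
  | succ n ih => rw [List.replicate_succ, cnt_cons, ih]; split_ifs <;> omega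

lemma cnt_map_inj (f : β → γ) (hf : Function.Injective f) (t : β) (l : List β) :
    cnt (f t) (l.map f) = cnt t l := by
  unfold cnt
  rw [List.countP_map]
  congr 1
  funext c
  simp [Function.comp, hf.eq_iff]

lemma cnt_eq_zero {t : β} {l : List β} (h : t ∉ l) : cnt t l = 0 := by
  rw [cnt, List.countP_eq_zero]
  intro c hc
  simp only [decide_eq_true_eq]
  rintro rfl; exact h hc

lemma cnt_pos {t : β} {l : List β} (h : t ∈ l) : 0 < cnt t l := by
  rw [cnt, List.countP_pos_iff]
  exact ⟨t, h, by simp⟩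

end cnt

/-! ### Shuffle facts -/

lemma shuffle_cnt {β : Type*} [DecidableEq β] {u v w : List β} (h : Shuffle u v w) (t : β) :
    cnt t w = cnt t u + cnt t v := by
  induction h with
  | nil => simp [cnt]
  | left _ ih => rw [cnt_cons, cnt_cons, ih]; omega
  | right _ ih => rw [cnt_cons, cnt_cons, ih]; omega

lemma shuffle_append {β : Type*} : ∀ u v : List β, Shuffle u v (u ++ v) := by
  intro u
  induction u with
  | nil =>
    intro v
    induction v with
    | nil => exact Shuffle.nil
    | cons a v ih => exact Shuffle.right ih
  | cons a u ih => intro v; exact Shuffle.left (ih v)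

lemma mem_marked_cnt {α : Type} [DecidableEq α] {s : List (α ⊕ α)}
    (hs : s ∈ markedSelfShuffle α) (c : α) :
    cnt (Sum.inl c : α ⊕ α) s = cnt (Sum.inr c : α ⊕ α) s := by
  obtain ⟨u0, hsh⟩ := hs
  have h1 := shuffle_cnt hsh (Sum.inl c : α ⊕ α)
  have h2 := shuffle_cnt hsh (Sum.inr c : α ⊕ α)
  have e1 : cnt (Sum.inl c : α ⊕ α) (u0.map Sum.inl) = cnt c u0 :=
    cnt_map_inj Sum.inl Sum.inl_injective c u0
  have e2 : cnt (Sum.inr c : α ⊕ α) (u0.map Sum.inr) = cnt c u0 :=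
    cnt_map_inj Sum.inr Sum.inr_injective c u0
  have e3 : cnt (Sum.inl c : α ⊕ α) (u0.map Sum.inr) = 0 := by
    refine cnt_eq_zero ?_
    intro hmem
    obtain ⟨d, _, hd⟩ := List.mem_map.mp hmem
    exact Sum.inl_ne_inr hd.symm
  have e4 : cnt (Sum.inr c : α ⊕ α) (u0.map Sum.inl) = 0 := by
    refine cnt_eq_zero ?_
    intro hmem
    obtain ⟨d, _, hd⟩ := List.mem_map.mp hmem
    exact Sum.inl_ne_inr hd
  omega

/-! ### The main theorem -/

theorem marked_not_cf {α : Type} (h2 : ∃ a b : α, a ≠ b) :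
    ¬ (markedSelfShuffle α).IsContextFree := by
  classical
  obtain ⟨a, b, hab⟩ := h2
  rintro ⟨g, hg⟩
  obtain ⟨p, hp1, hpump⟩ := weak_pumping (g := g)
  set W : List (α ⊕ α) := List.replicate p (Sum.inl a) ++ List.replicate p (Sum.inl b) ++
      List.replicate p (Sum.inr a) ++ List.replicate p (Sum.inr b) with hW
  have hWmem : W ∈ g.language := by
    rw [hg]
    refine ⟨List.replicate p a ++ List.replicate p b, ?_⟩
    have := shuffle_append ((List.replicate p a ++ List.replicate p b).map Sum.inl)
      ((List.replicate p a ++ List.replicate p b).map Sum.inr)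
    simpa [hW, List.map_append, List.map_replicate, List.append_assoc] using this
  have hWlen : p ≤ W.length := by
    simp only [hW, List.length_append, List.length_replicate]; omega
  obtain ⟨u, v, x, y, z, hweq, hlen, hvy, hmem⟩ := hpump W hWmem hWlen
  -- counts in W
  have hcal : cnt (Sum.inl a : α ⊕ α) W = p := by
    rw [hW]
    rw [cnt_append, cnt_append, cnt_append, cnt_replicate, cnt_replicate, cnt_replicate,
      cnt_replicate]
    simp [hab, Ne.symm hab]
  have hcbl : cnt (Sum.inl b : α ⊕ α) W = p := by
    rw [hW]
    rw [cnt_append, cnt_append, cnt_append, cnt_replicate, cnt_replicate, cnt_replicate,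
      cnt_replicate]
    simp [hab, Ne.symm hab]
  have hcar : cnt (Sum.inr a : α ⊕ α) W = p := by
    rw [hW]
    rw [cnt_append, cnt_append, cnt_append, cnt_replicate, cnt_replicate, cnt_replicate,
      cnt_replicate]
    simp [hab, Ne.symm hab]
  have hcbr : cnt (Sum.inr b : α ⊕ α) W = p := by
    rw [hW]
    rw [cnt_append, cnt_append, cnt_append, cnt_replicate, cnt_replicate, cnt_replicate,
      cnt_replicate]
    simp [hab, Ne.symm hab]
  -- the two copies of the pumped-down word have equal counts
  have hfmem : u ++ x ++ z ∈ markedSelfShuffle α := by rw [← hg]; exact hmem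
  have hfa := mem_marked_cnt hfmem a
  have hfb := mem_marked_cnt hfmem b
  -- count splitting
  have hsplit : ∀ t : α ⊕ α, cnt t (u ++ x ++ z) + cnt t (v ++ y) = cnt t W := by
    intro t
    rw [hweq]
    simp only [cnt_append]
    omega
  -- locality of v ++ x ++ y
  have hSW : W = (u ++ (v ++ x ++ y)) ++ z := by rw [hweq]; simp [List.append_assoc]
  have hlensum : u.length + (v ++ x ++ y).length + z.length = 4 * p := by
    have h0 := congrArg List.length hSW
    simp only [List.length_append, hW, List.length_replicate] at h0
    simp only [List.length_append]
    omega
  have hmemS : ∀ c ∈ v ++ y, c ∈ v ++ x ++ y := by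
    intro c hc
    rcases List.mem_append.mp hc with hc | hc
    · exact List.mem_append.mpr (Or.inl (List.mem_append.mpr (Or.inl hc)))
    · exact List.mem_append.mpr (Or.inr hc)
  have htakeW : ∀ c ∈ v ++ x ++ y, c ∈ List.take (u.length + (v ++ x ++ y).length) W := by
    intro c hc
    have h0 : List.take (u.length + (v ++ x ++ y).length) W = u ++ (v ++ x ++ y) := by
      rw [hSW]
      exact List.take_left' (by simp)
    rw [h0]
    exact List.mem_append.mpr (Or.inr hc)
  have hdropW : ∀ c ∈ v ++ x ++ y, c ∈ List.drop u.length W := by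
    intro c hc
    have h0 : List.drop u.length W = (v ++ x ++ y) ++ z := by
      rw [hSW, List.append_assoc]
      exact List.drop_left' rfl
    rw [h0]
    exact List.mem_append.mpr (Or.inl hc)
  -- prefix/suffix block computations
  have htake2 : List.take (p + p) W = List.replicate p (Sum.inl a : α ⊕ α) ++
      List.replicate p (Sum.inl b) := by
    have e : W = (List.replicate p (Sum.inl a : α ⊕ α) ++ List.replicate p (Sum.inl b)) ++
        (List.replicate p (Sum.inr a) ++ List.replicate p (Sum.inr b)) := by
      rw [hW]; simp
    rw [e]
    exact List.take_left' (by simp)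
  have htake3 : List.take (p + p + p) W = List.replicate p (Sum.inl a : α ⊕ α) ++
      List.replicate p (Sum.inl b) ++ List.replicate p (Sum.inr a) := by
    have e : W = (List.replicate p (Sum.inl a : α ⊕ α) ++ List.replicate p (Sum.inl b) ++
        List.replicate p (Sum.inr a)) ++ List.replicate p (Sum.inr b) := by
      rw [hW]
    rw [e]
    exact List.take_left' (by simp only [List.length_append, List.length_replicate])
  have hdrop1 : List.drop p W = List.replicate p (Sum.inl b : α ⊕ α) ++
      (List.replicate p (Sum.inr a) ++ List.replicate p (Sum.inr b)) := by
    have e : W = List.replicate p (Sum.inl a : α ⊕ α) ++ (List.replicate p (Sum.inl b) ++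
        (List.replicate p (Sum.inr a) ++ List.replicate p (Sum.inr b))) := by
      rw [hW]; simp
    rw [e]
    exact List.drop_left' (by simp)
  have hdrop2 : List.drop (p + p) W = List.replicate p (Sum.inr a : α ⊕ α) ++
      List.replicate p (Sum.inr b) := by
    have e : W = (List.replicate p (Sum.inl a : α ⊕ α) ++ List.replicate p (Sum.inl b)) ++
        (List.replicate p (Sum.inr a) ++ List.replicate p (Sum.inr b)) := by
      rw [hW]; simp
    rw [e]
    exact List.drop_left' (by simp)
  -- take monotonicity helper
  have hmemtake : ∀ (k : ℕ), u.length + (v ++ x ++ y).length ≤ k →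
      ∀ c ∈ v ++ x ++ y, c ∈ List.take k W := by
    intro k hk c hc
    have h0 : List.take (u.length + (v ++ x ++ y).length) W =
        List.take (u.length + (v ++ x ++ y).length) (List.take k W) := by
      rw [List.take_take, min_eq_left hk]
    have h1 := htakeW c hc
    rw [h0] at h1
    exact List.take_subset _ _ h1
  have hmemdrop : ∀ (k : ℕ), k ≤ u.length → ∀ c ∈ v ++ x ++ y, c ∈ List.drop k W := by
    intro k hk c hc
    have h0 : List.drop u.length W = List.drop (u.length - k) (List.drop k W) := by
      rw [List.drop_drop]
      congr 1
      omega
    have h1 := hdropW c hc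
    rw [h0] at h1
    exact List.drop_subset _ _ h1
  -- three cases for the window position
  have hpair : (∀ c ∈ v ++ x ++ y, c = (Sum.inl a : α ⊕ α) ∨ c = Sum.inl b) ∨
      (∀ c ∈ v ++ x ++ y, c = (Sum.inl b : α ⊕ α) ∨ c = Sum.inr a) ∨
      (∀ c ∈ v ++ x ++ y, c = (Sum.inr a : α ⊕ α) ∨ c = Sum.inr b) := by
    rcases le_or_gt u.length p with hn | hn
    · left
      intro c hc
      have h1 : c ∈ List.take (p + p) W := hmemtake (p + p) (by omega) c hc
      rw [htake2] at h1
      rcases List.mem_append.mp h1 with h1 | h1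
      · exact Or.inl (List.eq_of_mem_replicate h1)
      · exact Or.inr (List.eq_of_mem_replicate h1)
    · rcases le_or_gt u.length (p + p) with hn2 | hn2
      · right; left
        intro c hc
        have h1 : c ∈ List.take (p + p + p) W := hmemtake (p + p + p) (by omega) c hc
        have h2 : c ∈ List.drop p W := hmemdrop p (by omega) c hc
        rw [htake3] at h1
        rw [hdrop1] at h2
        rcases List.mem_append.mp h2 with h2 | h2
        · exact Or.inl (List.eq_of_mem_replicate h2)
        · rcases List.mem_append.mp h2 with h2 | h2
          · exact Or.inr (List.eq_of_mem_replicate h2)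
          · -- c = inr b, but c ∈ take 3p: contradiction
            exfalso
            have hc2 := List.eq_of_mem_replicate h2
            subst hc2
            rcases List.mem_append.mp h1 with h1 | h1
            · rcases List.mem_append.mp h1 with h1 | h1
              · exact Sum.inl_ne_inr (List.eq_of_mem_replicate h1).symm
              · exact Sum.inl_ne_inr (List.eq_of_mem_replicate h1).symm
            · exact hab (Sum.inr_injective (List.eq_of_mem_replicate h1)).symm
      · right; right
        intro c hc
        have h2 : c ∈ List.drop (p + p) W := hmemdrop (p + p) (by omega) c hc
        rw [hdrop2] at h2
        rcases List.mem_append.mp h2 with h2 | h2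
        · exact Or.inl (List.eq_of_mem_replicate h2)
        · exact Or.inr (List.eq_of_mem_replicate h2)
  -- final counting contradiction
  obtain ⟨c0, hc0⟩ := List.exists_mem_of_ne_nil _ hvy
  have hc0S : c0 ∈ v ++ x ++ y := hmemS c0 hc0
  have hs1 := hsplit (Sum.inl a : α ⊕ α)
  have hs2 := hsplit (Sum.inl b : α ⊕ α)
  have hs3 := hsplit (Sum.inr a : α ⊕ α)
  have hs4 := hsplit (Sum.inr b : α ⊕ α)
  rw [hcal] at hs1
  rw [hcbl] at hs2
  rw [hcar] at hs3
  rw [hcbr] at hs4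
  have hzero : ∀ t : α ⊕ α, (∀ c ∈ v ++ x ++ y, c ≠ t) → cnt t (v ++ y) = 0 := by
    intro t ht
    refine cnt_eq_zero ?_
    intro hmem
    exact ht t (hmemS t hmem) rfl
  rcases hpair with hp | hp | hp
  · have z3 : cnt (Sum.inr a : α ⊕ α) (v ++ y) = 0 := by
      refine hzero _ ?_
      intro c hc hct
      rcases hp c hc with rfl | rfl
      · exact Sum.inl_ne_inr hct
      · exact Sum.inl_ne_inr hct
    have z4 : cnt (Sum.inr b : α ⊕ α) (v ++ y) = 0 := by
      refine hzero _ ?_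
      intro c hc hct
      rcases hp c hc with rfl | rfl
      · exact Sum.inl_ne_inr hct
      · exact Sum.inl_ne_inr hct
    have hpos : 0 < cnt (Sum.inl a : α ⊕ α) (v ++ y) + cnt (Sum.inl b : α ⊕ α) (v ++ y) := by
      rcases hp c0 hc0S with rfl | rfl
      · have := cnt_pos hc0; omega
      · have := cnt_pos hc0; omega
    omega
  · have z1 : cnt (Sum.inl a : α ⊕ α) (v ++ y) = 0 := by
      refine hzero _ ?_
      intro c hc hct
      rcases hp c hc with rfl | rfl
      · exact hab (Sum.inl_injective hct).symm
      · exact Sum.inl_ne_inr hct.symm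
    have z4 : cnt (Sum.inr b : α ⊕ α) (v ++ y) = 0 := by
      refine hzero _ ?_
      intro c hc hct
      rcases hp c hc with rfl | rfl
      · exact Sum.inl_ne_inr hct
      · exact hab (Sum.inr_injective hct)
    have hpos : 0 < cnt (Sum.inl b : α ⊕ α) (v ++ y) + cnt (Sum.inr a : α ⊕ α) (v ++ y) := by
      rcases hp c0 hc0S with rfl | rfl
      · have := cnt_pos hc0; omega
      · have := cnt_pos hc0; omega
    omega
  · have z1 : cnt (Sum.inl a : α ⊕ α) (v ++ y) = 0 := by
      refine hzero _ ?_
      intro c hc hct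
      rcases hp c hc with rfl | rfl
      · exact Sum.inl_ne_inr hct.symm
      · exact Sum.inl_ne_inr hct.symm
    have z2 : cnt (Sum.inl b : α ⊕ α) (v ++ y) = 0 := by
      refine hzero _ ?_
      intro c hc hct
      rcases hp c hc with rfl | rfl
      · exact Sum.inl_ne_inr hct.symm
      · exact Sum.inl_ne_inr hct.symm
    have hpos : 0 < cnt (Sum.inr a : α ⊕ α) (v ++ y) + cnt (Sum.inr b : α ⊕ α) (v ++ y) := by
      rcases hp c0 hc0S with rfl | rfl
      · have := cnt_pos hc0; omega
      · have := cnt_pos hc0; omega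
    omega

end CopyPump

/-- If `L_Σ` were context-free (with `|Σ| ≥ 2`), then the copy language `{ww : w ∈ Σ*}`
would be context-free; hence `L_Σ` is not context-free. -/
theorem stmt_7 (α : Type) (h2 : ∃ a b : α, a ≠ b) :
    ((markedSelfShuffle α).IsContextFree →
      Language.IsContextFree ({w | ∃ u : List α, w = u ++ u} : Language α)) ∧
    ¬ (markedSelfShuffle α).IsContextFree := by
  have hncf := CopyPump.marked_not_cf h2
  exact ⟨fun h => absurd h hncf, hncf⟩
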